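/- Let 0 < T₁ ≤ T₂ and let A : [T₁, T₂] → ℝ be a lower semicontinuous function such that A(t) > 0 for all t ∈ [T₁, T₂] and such that for every t₀ ∈ [T₁, T₂) the upper right Dini derivative satisfies D⁺A(t₀) ≤ (3/(4t₀))·A(t₀) − 4π. Then T₂ < T₁ · exp(A(T₁)/(4π·T₁)). -/

import Mathlib

open Filter Set

/-- The upper right Dini derivative `D⁺f(t) = limsup_{h → 0⁺} (f(t+h) - f(t))/h`,
taking values in the extended reals. -/
noncomputable def upperDiniDeriv (f : ℝ → ℝ) (t : ℝ) : EReal :=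
  Filter.limsup (fun h : ℝ => (((f (t + h) - f t) / h : ℝ) : EReal))
    (nhdsWithin 0 (Set.Ioi 0))

lemma barrier (a b : ℝ) (hab : a ≤ b) (f φ φ' : ℝ → ℝ)
    (hf : LowerSemicontinuousOn f (Icc a b))
    (hφ : ∀ t ∈ Icc a b, HasDerivAt φ (φ' t) t)
    (h0 : f a ≤ φ a)
    (hd : ∀ t ∈ Ico a b, f t ≤ φ t → upperDiniDeriv f t < (φ' t : EReal)) :
    f b ≤ φ b := by
  set S : Set ℝ := {t | t ∈ Icc a b ∧ ∀ s ∈ Icc a t, f s ≤ φ s} with hS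
  have haS : a ∈ S := ⟨⟨le_refl a, hab⟩, fun s hs => by
    have : s = a := le_antisymm hs.2 hs.1
    rw [this]; exact h0⟩
  have hbdd : BddAbove S := ⟨b, fun t ht => ht.1.2⟩
  have hne : S.Nonempty := ⟨a, haS⟩
  set c := sSup S with hc
  have hcab : c ∈ Icc a b := ⟨le_csSup hbdd haS, csSup_le hne (fun t ht => ht.1.2)⟩
  have hIco : ∀ s ∈ Ico a c, f s ≤ φ s := by
    intro s hs
    obtain ⟨t, htS, hst⟩ := exists_lt_of_lt_csSup hne hs.2
    exact htS.2 s ⟨hs.1, le_of_lt hst⟩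
  have hfc : f c ≤ φ c := by
    rcases eq_or_lt_of_le hcab.1 with h | h
    · rw [← h]; exact h0
    · by_contra hlt
      push_neg at hlt
      -- φ c < f c; use lower semicontinuity on left approach
      have hNB : (nhdsWithin c (Ico a c)).NeBot := by
        rw [mem_closure_iff_nhdsWithin_neBot.symm]
        rw [closure_Ico (ne_of_lt h)]
        exact ⟨le_of_lt h, le_refl c⟩
      set y := (φ c + f c) / 2 with hy
      have hy1 : φ c < y := by rw [hy]; linarith
      have hy2 : y < f c := by rw [hy]; linarith
      have hev1 : ∀ᶠ t in nhdsWithin c (Ico a c), y < f t := by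
        have := hf c hcab y hy2
        exact nhdsWithin_mono c (fun t (ht : t ∈ Ico a c) =>
          (⟨ht.1, le_trans (le_of_lt ht.2) hcab.2⟩ : t ∈ Icc a b)) this
      have hφcont : ContinuousAt φ c := (hφ c hcab).continuousAt
      have hev2 : ∀ᶠ t in nhdsWithin c (Ico a c), φ t < y :=
        ((hφcont.tendsto.eventually (eventually_lt_nhds hy1)).filter_mono
          nhdsWithin_le_nhds)
      have hev3 : ∀ᶠ t in nhdsWithin c (Ico a c), f t ≤ φ t :=
        eventually_nhdsWithin_of_forall hIco
      obtain ⟨t, h1, h2, h3⟩ := (hev1.and (hev2.and hev3)).exists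
      linarith [h1, h2, h3]
  have hcS : c ∈ S := ⟨hcab, fun s hs => by
    rcases eq_or_lt_of_le hs.2 with h | h
    · rw [h]; exact hfc
    · exact hIco s ⟨hs.1, h⟩⟩
  rcases eq_or_lt_of_le hcab.2 with hcb | hcb
  · rw [← hcb]; exact hfc
  · exfalso
    have hdc := hd c ⟨hcab.1, hcb⟩ hfc
    obtain ⟨m, hm1, hm2⟩ := EReal.exists_between_coe_real hdc
    have hm2' : m < φ' c := by exact_mod_cast hm2
    -- eventually f (c+h) < f c + m*h
    have hev1 : ∀ᶠ h' in nhdsWithin (0:ℝ) (Ioi 0), f (c + h') < f c + m * h' := by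
      have := Filter.eventually_lt_of_limsup_lt hm1
      filter_upwards [this, self_mem_nhdsWithin] with h' h1 h2
      have hpos : (0:ℝ) < h' := h2
      rw [EReal.coe_lt_coe_iff] at h1
      rw [div_lt_iff₀ hpos] at h1
      linarith
    -- eventually φ (c+h) > φ c + m*h
    have hslope : Tendsto (slope φ c) (nhdsWithin c {c}ᶜ) (nhds (φ' c)) :=
      hasDerivAt_iff_tendsto_slope.mp (hφ c hcab)
    have hmap : Tendsto (fun h' : ℝ => c + h') (nhdsWithin (0:ℝ) (Ioi 0))
        (nhdsWithin c {c}ᶜ) := by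
      apply Tendsto.inf
      · simpa using (tendsto_const_nhds.add tendsto_id : Tendsto (fun h' : ℝ => c + h') (nhds 0) (nhds (c + 0)))
      · apply tendsto_principal_principal.mpr
        intro h' hh'
        simp only [mem_compl_iff, mem_singleton_iff]
        have : (0:ℝ) < h' := hh'
        intro hcontra
        nlinarith [hcontra]
    have hev2 : ∀ᶠ h' in nhdsWithin (0:ℝ) (Ioi 0), φ c + m * h' < φ (c + h') := by
      have := hmap.eventually (hslope.eventually (eventually_gt_nhds hm2'))
      filter_upwards [this, self_mem_nhdsWithin] with h' h1 h2
      have hpos : (0:ℝ) < h' := h2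
      rw [slope_def_field] at h1
      have he : c + h' - c = h' := by ring
      rw [he] at h1
      rw [lt_div_iff₀ hpos] at h1
      linarith
    have hev3 : ∀ᶠ h' in nhdsWithin (0:ℝ) (Ioi 0), h' < b - c :=
      eventually_nhdsWithin_of_eventually_nhds
        (eventually_lt_nhds (by linarith : (0:ℝ) < b - c))
    have hall : ∀ᶠ h' in nhdsWithin (0:ℝ) (Ioi 0),
        f (c + h') ≤ φ (c + h') ∧ h' < b - c := by
      filter_upwards [hev1, hev2, hev3] with h' h1 h2 h3
      exact ⟨le_of_lt (lt_of_lt_of_le h1 (le_trans (by linarith [hfc]) (le_of_lt h2))), h3⟩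
    obtain ⟨u, hu, hsub⟩ := mem_nhdsGT_iff_exists_Ioc_subset.mp hall
    have hu0 : (0:ℝ) < u := hu
    set u' := min u ((b - c)/2) with hu'
    have hu'0 : 0 < u' := lt_min hu0 (by linarith)
    have hu'le : u' ≤ u := min_le_left _ _
    have hcu'b : c + u' ≤ b := by
      have : u' ≤ (b-c)/2 := min_le_right _ _
      linarith
    have htS : c + u' ∈ S := by
      constructor
      · exact ⟨by linarith [hcab.1], hcu'b⟩
      · intro s hs
        rcases le_or_gt s c with h | h
        · exact hcS.2 s ⟨hs.1, h⟩
        · have hmem : s - c ∈ Ioc (0:ℝ) u := ⟨by linarith, by linarith [hs.2]⟩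
          have := (hsub hmem).1
          simpa using this
    have : c + u' ≤ c := le_csSup hbdd htS
    linarith

theorem stmt1 (T₁ T₂ : ℝ) (hT₁ : 0 < T₁) (hT : T₁ ≤ T₂) (A : ℝ → ℝ)
    (hlsc : LowerSemicontinuousOn A (Set.Icc T₁ T₂))
    (hpos : ∀ t ∈ Set.Icc T₁ T₂, 0 < A t)
    (hdini : ∀ t₀ ∈ Set.Ico T₁ T₂,
      upperDiniDeriv A t₀ ≤ (((3 / (4 * t₀)) * A t₀ - 4 * Real.pi : ℝ) : EReal)) :
    T₂ < T₁ * Real.exp (A T₁ / (4 * Real.pi * T₁)) := by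
  have hπ : 0 < Real.pi := Real.pi_pos
  set K : ℝ := 16 * Real.pi with hK
  have hKpos : 0 < K := by positivity
  set c₀ : ℝ := A T₁ / T₁ ^ ((3:ℝ)/4) + K * T₁ ^ ((1:ℝ)/4) with hc₀
  have hT₁34 : (0:ℝ) < T₁ ^ ((3:ℝ)/4) := Real.rpow_pos_of_pos hT₁ _
  have hT₁14 : (0:ℝ) < T₁ ^ ((1:ℝ)/4) := Real.rpow_pos_of_pos hT₁ _
  have hT₁split : T₁ ^ ((1:ℝ)/4) * T₁ ^ ((3:ℝ)/4) = T₁ := by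
    rw [← Real.rpow_add hT₁]; norm_num
  have hA₁pos : 0 < A T₁ := hpos T₁ ⟨le_refl _, hT⟩
  have hmain : ∀ ε > 0, A T₂ ≤ c₀ * T₂ ^ ((3:ℝ)/4) - K * T₂ + ε * (T₂ - T₁) := by
    intro ε hε
    set φ : ℝ → ℝ := fun t => c₀ * t ^ ((3:ℝ)/4) - K * t + ε * (t - T₁) with hφdef
    set φ' : ℝ → ℝ := fun t => c₀ * ((3:ℝ)/4 * t ^ ((3:ℝ)/4 - 1)) - K + ε with hφ'def
    have hderiv : ∀ t ∈ Icc T₁ T₂, HasDerivAt φ (φ' t) t := by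
      intro t ht
      have ht0 : 0 < t := lt_of_lt_of_le hT₁ ht.1
      have h1 : HasDerivAt (fun t : ℝ => t ^ ((3:ℝ)/4)) ((3:ℝ)/4 * t ^ ((3:ℝ)/4 - 1)) t :=
        Real.hasDerivAt_rpow_const (Or.inl (ne_of_gt ht0))
      have h2 := ((h1.const_mul c₀).sub ((hasDerivAt_id t).const_mul K)).add
        (((hasDerivAt_id t).sub_const T₁).const_mul ε)
      convert h2 using 1
      all_goals first | rfl | simp [hφ'def]
    have h0 : A T₁ ≤ φ T₁ := by
      have heq : φ T₁ = A T₁ := by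
        simp only [hφdef, hc₀]
        rw [add_mul, div_mul_cancel₀ _ (ne_of_gt hT₁34), mul_assoc, hT₁split]
        ring
      rw [heq]
    have hd : ∀ t ∈ Ico T₁ T₂, A t ≤ φ t → upperDiniDeriv A t < (φ' t : EReal) := by
      intro t ht hAφ
      have ht0 : 0 < t := lt_of_lt_of_le hT₁ ht.1
      refine lt_of_le_of_lt (hdini t ht) ?_
      rw [EReal.coe_lt_coe_iff]
      have hstep : 3 / (4*t) * A t - 4 * Real.pi ≤ 3 / (4*t) * φ t - 4 * Real.pi := by
        have h34t : (0:ℝ) < 3 / (4*t) := by positivity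
        have := mul_le_mul_of_nonneg_left hAφ (le_of_lt h34t)
        linarith
      refine lt_of_le_of_lt hstep ?_
      have e1 : 3 / (4*t) * (c₀ * t ^ ((3:ℝ)/4)) = c₀ * ((3:ℝ)/4 * t ^ ((3:ℝ)/4 - 1)) := by
        rw [Real.rpow_sub ht0, Real.rpow_one]
        field_simp
        try ring
      have e2 : 3 / (4*t) * φ t - 4 * Real.pi
          = c₀ * ((3:ℝ)/4 * t ^ ((3:ℝ)/4 - 1)) + 3 / (4*t) * (- K * t + ε * (t - T₁)) - 4 * Real.pi := by
        simp only [hφdef]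
        rw [← e1]
        ring
      rw [e2]
      simp only [hφ'def]
      have hgoal : 3 / (4*t) * (- K * t + ε * (t - T₁)) - 4 * Real.pi < - K + ε := by
        rw [div_mul_eq_mul_div, sub_lt_iff_lt_add, div_lt_iff₀ (by positivity : (0:ℝ) < 4*t)]
        have hT₁t : T₁ ≤ t := ht.1
        nlinarith [mul_pos hε hT₁, mul_pos hε ht0]
      linarith
    have := barrier T₁ T₂ hT A φ φ' hlsc hderiv h0 hd
    simpa [hφdef] using this
  have hlim : A T₂ ≤ c₀ * T₂ ^ ((3:ℝ)/4) - K * T₂ := by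
    refine le_of_forall_pos_le_add ?_
    intro ε hε
    have hd : 0 < T₂ - T₁ + 1 := by linarith
    have h1 := hmain (ε / (T₂ - T₁ + 1)) (by positivity)
    have h2 : ε / (T₂ - T₁ + 1) * (T₂ - T₁) ≤ ε := by
      rw [div_mul_eq_mul_div, div_le_iff₀ hd]
      nlinarith
    linarith
  have hA₂pos : 0 < A T₂ := hpos T₂ ⟨hT, le_refl _⟩
  have hT₂0 : 0 < T₂ := lt_of_lt_of_le hT₁ hT
  have hT₂34 : (0:ℝ) < T₂ ^ ((3:ℝ)/4) := Real.rpow_pos_of_pos hT₂0 _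
  have hT₂14 : (0:ℝ) < T₂ ^ ((1:ℝ)/4) := Real.rpow_pos_of_pos hT₂0 _
  have hT₂split : T₂ ^ ((1:ℝ)/4) * T₂ ^ ((3:ℝ)/4) = T₂ := by
    rw [← Real.rpow_add hT₂0]; norm_num
  have hKT₂ : K * T₂ < c₀ * T₂ ^ ((3:ℝ)/4) := by linarith
  have hstep : K * T₂ ^ ((1:ℝ)/4) < c₀ := by
    refine lt_of_mul_lt_mul_right ?_ (le_of_lt hT₂34)
    calc K * T₂ ^ ((1:ℝ)/4) * T₂ ^ ((3:ℝ)/4) = K * T₂ := by rw [mul_assoc, hT₂split]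
      _ < c₀ * T₂ ^ ((3:ℝ)/4) := hKT₂
  set x := A T₁ / (K * T₁) with hx
  have hxpos : 0 < x := div_pos hA₁pos (by positivity)
  have e : A T₁ / T₁ ^ ((3:ℝ)/4) = K * T₁ ^ ((1:ℝ)/4) * x := by
    rw [hx]
    field_simp
    linear_combination (-1) * hT₁split
  have h14 : T₂ ^ ((1:ℝ)/4) < T₁ ^ ((1:ℝ)/4) * (1 + x) := by
    rw [hc₀, e] at hstep
    have : K * T₂ ^ ((1:ℝ)/4) < K * (T₁ ^ ((1:ℝ)/4) * (1 + x)) := by ring_nf; ring_nf at hstep; linarith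
    exact lt_of_mul_lt_mul_left this (le_of_lt hKpos)
  have hexp : 1 + x < Real.exp x := by
    have := Real.add_one_lt_exp (ne_of_gt hxpos); linarith
  have h14' : T₂ ^ ((1:ℝ)/4) < T₁ ^ ((1:ℝ)/4) * Real.exp x :=
    lt_trans h14 (by nlinarith [Real.exp_pos x])
  have hpow := pow_lt_pow_left₀ h14' (le_of_lt hT₂14) (by norm_num : (4:ℕ) ≠ 0)
  have e2 : (T₂ ^ ((1:ℝ)/4)) ^ (4:ℕ) = T₂ := by
    rw [← Real.rpow_natCast (T₂ ^ ((1:ℝ)/4)) 4, ← Real.rpow_mul (le_of_lt hT₂0)]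
    norm_num
  have e3 : (T₁ ^ ((1:ℝ)/4)) ^ (4:ℕ) = T₁ := by
    rw [← Real.rpow_natCast (T₁ ^ ((1:ℝ)/4)) 4, ← Real.rpow_mul (le_of_lt hT₁)]
    norm_num
  have e4 : Real.exp x ^ (4:ℕ) = Real.exp (A T₁ / (4 * Real.pi * T₁)) := by
    rw [← Real.exp_nat_mul]
    congr 1
    rw [hx, hK]
    field_simp
    ring
  rw [mul_pow, e2, e3, e4] at hpow
  exact hpow
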